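/- arXiv:1005.2361 — 3 statements merged into one kernel-verified Lean document; each statement's English description precedes it below -/
import Mathlib

section
/- Let a : ℝ → ℝ³ × ℝ, a(τ) = (𝐚(τ), a⁰(τ)), be differentiable at τ. Then lim_{h→0} (2(1 − e^{-|𝐚(τ+h) − 𝐚(τ)|²/2 + (a⁰(τ+h) − a⁰(τ))²/2}))/h² = |𝐚'(τ)|² − (a⁰'(τ))². (Since 2(1 − e^{-|𝐚−𝐛|²/2 + (a⁰−b⁰)²/2}) is the squared H_η-distance ‖δ⁴_a − δ⁴_b‖²_{H_η} between the delta functions at a and b, this shows that the indefinite metric on H induces the Minkowski metric of signature (+,+,+,−) on the submanifold M₄ of delta functions, i.e., the embedding of Minkowski space-time is isometric.) -/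
open MeasureTheory Real Filter

/-- If `a : ℝ → ℝ³ × ℝ`, `a(τ) = (𝐚(τ), a⁰(τ))`, is differentiable at `τ`,
then `lim_{h→0} 2(1 − e^{-|𝐚(τ+h)−𝐚(τ)|²/2 + (a⁰(τ+h)−a⁰(τ))²/2})/h² = |𝐚'(τ)|² − (a⁰'(τ))²`:
the indefinite metric on the Krein space `H` induces the Minkowski metric of signature
`(+,+,+,−)` on the submanifold `M₄` of delta functions. -/
theorem induced_metric_is_minkowski
    (a : ℝ → EuclideanSpace ℝ (Fin 3) × ℝ) (τ : ℝ) (a' : EuclideanSpace ℝ (Fin 3) × ℝ)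
    (ha : HasDerivAt a a' τ) :
    Tendsto (fun h : ℝ =>
        2 * (1 - Real.exp (-‖(a (τ + h)).1 - (a τ).1‖ ^ 2 / 2 +
          ((a (τ + h)).2 - (a τ).2) ^ 2 / 2)) / h ^ 2)
      (nhdsWithin 0 {(0 : ℝ)}ᶜ) (nhds (‖a'.1‖ ^ 2 - a'.2 ^ 2)) := by
  set A : ℝ → EuclideanSpace ℝ (Fin 3) := fun h => (a (τ + h)).1 - (a τ).1 with hAdef
  set B : ℝ → ℝ := fun h => (a (τ + h)).2 - (a τ).2 with hBdef
  set f : ℝ → ℝ := fun h => -‖A h‖ ^ 2 / 2 + (B h) ^ 2 / 2 with hfdef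
  -- map h ↦ τ + h
  have hmap : Tendsto (fun h : ℝ => τ + h) (nhdsWithin 0 {(0:ℝ)}ᶜ) (nhdsWithin τ {τ}ᶜ) := by
    apply tendsto_nhdsWithin_of_tendsto_nhds_of_eventually_within
    · exact ((continuous_const.add continuous_id).tendsto' 0 τ (by simp)).mono_left
        nhdsWithin_le_nhds
    · filter_upwards [self_mem_nhdsWithin] with h hh
      simp only [Set.mem_compl_iff, Set.mem_singleton_iff] at hh ⊢
      intro hc; exact hh (by linarith)
  have hslope := (hasDerivAt_iff_tendsto_slope.mp ha).comp hmap
  have hv : Tendsto (fun h : ℝ => h⁻¹ • (a (τ + h) - a τ)) (nhdsWithin 0 {(0:ℝ)}ᶜ)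
      (nhds a') := by
    refine hslope.congr fun h => ?_
    simp [slope, Function.comp]
  have h1 : Tendsto (fun h : ℝ => ‖A h‖ ^ 2 / h ^ 2) (nhdsWithin 0 {(0:ℝ)}ᶜ)
      (nhds (‖a'.1‖ ^ 2)) := by
    have cont : Continuous (fun v : EuclideanSpace ℝ (Fin 3) × ℝ => ‖v.1‖ ^ 2) := by
      continuity
    have hc := (cont.tendsto a').comp hv
    refine hc.congr' ?_
    filter_upwards [self_mem_nhdsWithin] with h hh
    have hh' : h ≠ 0 := hh
    show ‖(h⁻¹ • (a (τ + h) - a τ)).1‖ ^ 2 = ‖A h‖ ^ 2 / h ^ 2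
    have : (h⁻¹ • (a (τ + h) - a τ)).1 = h⁻¹ • A h := rfl
    rw [this, norm_smul, mul_pow, norm_inv, Real.norm_eq_abs, inv_pow, sq_abs,
      div_eq_inv_mul]
  have h2 : Tendsto (fun h : ℝ => (B h) ^ 2 / h ^ 2) (nhdsWithin 0 {(0:ℝ)}ᶜ)
      (nhds (a'.2 ^ 2)) := by
    have cont : Continuous (fun v : EuclideanSpace ℝ (Fin 3) × ℝ => v.2 ^ 2) := by
      continuity
    have hc := (cont.tendsto a').comp hv
    refine hc.congr' ?_
    filter_upwards [self_mem_nhdsWithin] with h hh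
    show (h⁻¹ • (a (τ + h) - a τ)).2 ^ 2 = (B h) ^ 2 / h ^ 2
    have : (h⁻¹ • (a (τ + h) - a τ)).2 = h⁻¹ * B h := rfl
    rw [this, mul_pow, inv_pow, inv_mul_eq_div]
  set L : ℝ := -‖a'.1‖ ^ 2 / 2 + a'.2 ^ 2 / 2 with hLdef
  have hf2 : Tendsto (fun h : ℝ => f h / h ^ 2) (nhdsWithin 0 {(0:ℝ)}ᶜ) (nhds L) := by
    have := ((h1.neg.div_const 2).add (h2.div_const 2))
    refine this.congr fun h => ?_
    simp only [hfdef]; ring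
  have hh2 : Tendsto (fun h : ℝ => h ^ 2) (nhdsWithin 0 {(0:ℝ)}ᶜ) (nhds 0) := by
    have : Tendsto (fun h : ℝ => h ^ 2) (nhds 0) (nhds 0) := by
      simpa using (continuous_pow 2).tendsto (0 : ℝ)
    exact this.mono_left nhdsWithin_le_nhds
  have hf0 : Tendsto f (nhdsWithin 0 {(0:ℝ)}ᶜ) (nhds 0) := by
    have := hf2.mul hh2
    rw [mul_zero] at this
    refine this.congr' ?_
    filter_upwards [self_mem_nhdsWithin] with h hh
    have hh' : (h : ℝ) ^ 2 ≠ 0 := pow_ne_zero 2 hh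
    field_simp
    exact mul_div_cancel_right₀ (f h) (show h ≠ 0 from hh)
  have hsmall : ∀ᶠ h in nhdsWithin (0:ℝ) {(0:ℝ)}ᶜ, |f h| ≤ 1 := by
    have : ∀ᶠ x in nhds (0:ℝ), |x| ≤ 1 := by
      filter_upwards [Metric.closedBall_mem_nhds (0:ℝ) one_pos] with x hx
      simpa [Real.dist_eq] using hx
    exact hf0.eventually this
  have hR : Tendsto (fun h : ℝ => (Real.exp (f h) - 1 - f h) / h ^ 2)
      (nhdsWithin 0 {(0:ℝ)}ᶜ) (nhds 0) := by
    have hg : Tendsto (fun h : ℝ => (f h / h ^ 2) * f h) (nhdsWithin 0 {(0:ℝ)}ᶜ)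
        (nhds 0) := by simpa using hf2.mul hf0
    refine squeeze_zero_norm' ?_ hg
    filter_upwards [hsmall, self_mem_nhdsWithin] with h h1 h2
    have hne : h ≠ 0 := h2
    have hpos : (0:ℝ) < h ^ 2 := by positivity
    have hb := Real.abs_exp_sub_one_sub_id_le h1
    have : ‖(Real.exp (f h) - 1 - f h) / h ^ 2‖ = |Real.exp (f h) - 1 - f h| / h ^ 2 := by
      rw [Real.norm_eq_abs, abs_div, abs_of_pos hpos]
    rw [this]
    have heq : (f h / h ^ 2) * f h = (f h) ^ 2 / h ^ 2 := by ring
    rw [heq]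
    exact div_le_div_of_nonneg_right hb hpos.le
  have final := (hf2.const_mul (-2)).sub (hR.const_mul 2)
  rw [mul_zero, hLdef] at final
  have hval : -2 * (-‖a'.1‖ ^ 2 / 2 + a'.2 ^ 2 / 2) - 0 = ‖a'.1‖ ^ 2 - a'.2 ^ 2 := by ring
  rw [hval] at final
  refine final.congr fun h => ?_
  simp only [hfdef, hBdef, hAdef]
  ring
end

section
/- Let V : ℝ³ × ℝ → ℝ be continuous and bounded, and let ψ : ℝ³ × ℝ → ℂ be a Schwartz function on ℝ⁴. Then the following are equivalent: (i) for every Schwartz function χ on ℝ⁴ and every τ ∈ ℝ, d/dτ [∫_{ℝ³} ψ(x,τ) χ(x,τ) dx] = ∫_{ℝ³} ψ(x,τ) (∂χ/∂t)(x,τ) dx − i ∫_{ℝ³} (−Δ_x ψ(x,τ) + V(x,τ)ψ(x,τ)) χ(x,τ) dx; (ii) ψ satisfies the Schrödinger equation ∂ψ/∂t(x,t) = −i(−Δ_x ψ(x,t) + V(x,t)ψ(x,t)) for all (x,t) ∈ ℝ³ × ℝ. (Statement (i) is the weak formulation, obtained by pairing with test functions χ, of the equation dφ_τ/dτ = (−∂/∂t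 − iĥ)φ_τ for the path φ_τ(x,t) = ψ(x,t)δ(t−τ) in H, with Hamiltonian ĥ = −Δ + V.) -/
open MeasureTheory Real SchwartzMap
open scoped ContDiff

/-- The spatial Laplacian `Δ_x f` of a function `f : ℝ³ × ℝ → ℂ`. -/
noncomputable def spatialLaplacian (f : EuclideanSpace ℝ (Fin 3) × ℝ → ℂ)
    (p : EuclideanSpace ℝ (Fin 3) × ℝ) : ℂ :=
  ∑ i : Fin 3,
    fderiv ℝ (fun q => fderiv ℝ f q (EuclideanSpace.single i 1, (0 : ℝ))) p
      (EuclideanSpace.single i 1, (0 : ℝ))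

open scoped ContDiff

local notation "𝓔" => EuclideanSpace ℝ (Fin 3)
local notation "𝓟" => (EuclideanSpace ℝ (Fin 3) × ℝ)

-- temperate growth of a Schwartz function
lemma schwartz_temperate (f : SchwartzMap 𝓟 ℂ) : Function.HasTemperateGrowth ⇑f := by
  refine ⟨f.smooth ⊤, fun n => ?_⟩
  obtain ⟨C, hC, h⟩ := f.decay 0 n
  exact ⟨0, C, fun x => by simpa using h x⟩

-- product of Schwartz functions
noncomputable def mulS (f g : SchwartzMap 𝓟 ℂ) : SchwartzMap 𝓟 ℂ :=
  SchwartzMap.bilinLeftCLM (ContinuousLinearMap.mul ℝ ℂ) (schwartz_temperate g) f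

lemma mulS_apply (f g : SchwartzMap 𝓟 ℂ) (p : 𝓟) : mulS f g p = f p * g p := rfl

-- slice bound
lemma slice_bound (f : SchwartzMap 𝓟 ℂ) :
    ∃ C : ℝ, 0 ≤ C ∧ ∀ (x : 𝓔) (σ : ℝ), ‖f (x, σ)‖ ≤ C * ((1 + ‖x‖) ^ 4)⁻¹ := by
  refine ⟨2 ^ 4 * (Finset.Iic ((4 : ℕ), (0 : ℕ))).sup
      (fun m => SchwartzMap.seminorm ℝ m.1 m.2) f, by positivity, fun x σ => ?_⟩
  have h := SchwartzMap.one_add_le_sup_seminorm_apply (𝕜 := ℝ) (m := ((4:ℕ),(0:ℕ)))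
      le_rfl le_rfl f (x, σ)
  rw [norm_iteratedFDeriv_zero] at h
  have h1 : (1 + ‖x‖) ^ 4 * ‖f (x, σ)‖ ≤ (1 + ‖(x, σ)‖) ^ 4 * ‖f (x, σ)‖ := by
    gcongr
    exact norm_fst_le (x, σ)
  have hpos : (0:ℝ) < (1 + ‖x‖) ^ 4 := by positivity
  calc ‖f (x, σ)‖ = ((1 + ‖x‖) ^ 4)⁻¹ * ((1 + ‖x‖) ^ 4 * ‖f (x, σ)‖) := by
        field_simp
    _ ≤ ((1 + ‖x‖) ^ 4)⁻¹ * (2 ^ 4 * ((Finset.Iic ((4:ℕ),(0:ℕ))).sup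
          (fun m => SchwartzMap.seminorm ℝ m.1 m.2)) f) :=
        mul_le_mul_of_nonneg_left (h1.trans h) (by positivity)
    _ = 2 ^ 4 * ((Finset.Iic ((4:ℕ),(0:ℕ))).sup
          (fun m => SchwartzMap.seminorm ℝ m.1 m.2)) f * ((1 + ‖x‖) ^ 4)⁻¹ := by ring

lemma slice_continuous (f : SchwartzMap 𝓟 ℂ) (σ : ℝ) :
    Continuous (fun x : 𝓔 => f (x, σ)) :=
  f.continuous.comp (continuous_id.prodMk continuous_const)

lemma slice_integrable (f : SchwartzMap 𝓟 ℂ) (σ : ℝ) :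
    Integrable (fun x : 𝓔 => f (x, σ)) := by
  obtain ⟨C, hC0, hC⟩ := slice_bound f
  have hint : Integrable (fun x : 𝓔 => C * ((1 + ‖x‖) ^ 4)⁻¹) := by
    have h4 : (Module.finrank ℝ 𝓔 : ℝ) < 4 := by
      simp [finrank_euclideanSpace]; norm_num
    have := (integrable_one_add_norm (E := 𝓔) (μ := volume) h4).const_mul C
    refine this.congr (Filter.Eventually.of_forall fun x => ?_)
    simp only
    rw [show ((-4:ℝ)) = -(4:ℕ) by norm_num, Real.rpow_neg (by positivity),
      Real.rpow_natCast]
  exact hint.mono' ((slice_continuous f σ).aestronglyMeasurable)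
    (Filter.Eventually.of_forall fun x => hC x σ)

lemma hasDerivAt_slice_integral (f : SchwartzMap 𝓟 ℂ) (τ : ℝ) :
    HasDerivAt (fun σ : ℝ => ∫ x : 𝓔, f (x, σ))
      (∫ x : 𝓔, fderiv ℝ (⇑f) (x, τ) ((0 : 𝓔), (1 : ℝ))) τ := by
  set g : SchwartzMap 𝓟 ℂ := LineDeriv.lineDerivOpCLM ℝ (SchwartzMap 𝓟 ℂ) ((0 : 𝓔), (1 : ℝ)) f with hg
  obtain ⟨C, hC0, hC⟩ := slice_bound g
  have hint : Integrable (fun x : 𝓔 => C * ((1 + ‖x‖) ^ 4)⁻¹) := by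
    have h4 : (Module.finrank ℝ 𝓔 : ℝ) < 4 := by
      simp [finrank_euclideanSpace]; norm_num
    have := (integrable_one_add_norm (E := 𝓔) (μ := volume) h4).const_mul C
    refine this.congr (Filter.Eventually.of_forall fun x => ?_)
    simp only
    rw [show ((-4:ℝ)) = -(4:ℕ) by norm_num, Real.rpow_neg (by positivity),
      Real.rpow_natCast]
  have h := hasDerivAt_integral_of_dominated_loc_of_deriv_le (μ := volume)
      (F := fun σ (x : 𝓔) => f (x, σ)) (F' := fun σ (x : 𝓔) => g (x, σ))
      (x₀ := τ) (bound := fun x : 𝓔 => C * ((1 + ‖x‖) ^ 4)⁻¹) Filter.univ_mem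
      (Filter.Eventually.of_forall fun σ => (slice_continuous f σ).aestronglyMeasurable)
      (slice_integrable f τ)
      ((slice_continuous g τ).aestronglyMeasurable)
      (Filter.Eventually.of_forall fun x σ _ => hC x σ) hint
      (Filter.Eventually.of_forall fun x σ _ => ?_)
  · exact h.2
  · have hline : HasDerivAt (fun s : ℝ => ((x : 𝓔), s)) ((0 : 𝓔), (1 : ℝ)) σ :=
      (hasDerivAt_const σ x).prodMk (hasDerivAt_id σ)
    exact (f.differentiableAt.hasFDerivAt).comp_hasDerivAt σ hline

/-- A smooth compactly supported function is a Schwartz function. -/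
noncomputable def toSchwartz {E : Type*} [NormedAddCommGroup E] [NormedSpace ℝ E]
    (f : E → ℂ) (hsm : ContDiff ℝ ∞ f) (hsupp : HasCompactSupport f) : SchwartzMap E ℂ where
  toFun := f
  smooth' := hsm
  decay' := by
    intro k n
    have hcont : Continuous fun x : E => ‖x‖ ^ k * ‖iteratedFDeriv ℝ n f x‖ :=
      ((continuous_norm.pow k).mul
        ((hsm.continuous_iteratedFDeriv (mod_cast le_top)).norm))
    have hcs : HasCompactSupport fun x : E => ‖x‖ ^ k * ‖iteratedFDeriv ℝ n f x‖ := by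
      have h1 : HasCompactSupport fun x : E => ‖iteratedFDeriv ℝ n f x‖ :=
        (hsupp.iteratedFDeriv n).norm
      exact h1.mul_left
    obtain ⟨C, hC⟩ := hcont.bounded_above_of_compact_support hcs
    exact ⟨C, fun x => by simpa [Real.norm_eq_abs, abs_of_nonneg (by positivity : (0:ℝ) ≤ ‖x‖ ^ k * ‖iteratedFDeriv ℝ n f x‖)] using hC x⟩

lemma exists_schwartz_slice (t₀ : ℝ) (g : 𝓔 → ℝ) (hg : ContDiff ℝ ∞ g)
    (hgs : HasCompactSupport g) :
    ∃ χ : SchwartzMap 𝓟 ℂ, ∀ x : 𝓔, χ (x, t₀) = (g x : ℂ) := by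
  let b : ContDiffBump t₀ := ⟨1, 2, one_pos, one_lt_two⟩
  let f : 𝓟 → ℂ := fun p => ((g p.1 * b p.2 : ℝ) : ℂ)
  have hsm : ContDiff ℝ ∞ f :=
    Complex.ofRealCLM.contDiff.comp ((hg.comp contDiff_fst).mul
      ((b.contDiff (n := ⊤)).comp contDiff_snd))
  have hsupp : HasCompactSupport f := by
    apply HasCompactSupport.intro (hgs.prod b.hasCompactSupport)
    intro p hp
    simp only [Set.mem_prod, not_and_or] at hp
    rcases hp with hp | hp
    · simp [f, image_eq_zero_of_notMem_tsupport hp]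
    · simp [f, image_eq_zero_of_notMem_tsupport hp]
  refine ⟨toSchwartz f hsm hsupp, fun x => ?_⟩
  have : b t₀ = 1 := b.one_of_mem_closedBall (by simp [b])
  show f (x, t₀) = _
  simp [f, this]

lemma spatialLaplacian_eq_schwartz (f : SchwartzMap 𝓟 ℂ) (p : 𝓟) :
    spatialLaplacian (⇑f) p = ∑ i : Fin 3,
      (LineDeriv.lineDerivOpCLM ℝ (SchwartzMap 𝓟 ℂ) ((EuclideanSpace.single i 1 : 𝓔), (0:ℝ))
        (LineDeriv.lineDerivOpCLM ℝ (SchwartzMap 𝓟 ℂ) ((EuclideanSpace.single i 1 : 𝓔), (0:ℝ)) f)) p := rfl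

lemma slice_continuous_lap (f : SchwartzMap 𝓟 ℂ) (σ : ℝ) :
    Continuous (fun x : 𝓔 => spatialLaplacian (⇑f) (x, σ)) := by
  simp only [spatialLaplacian_eq_schwartz]
  exact continuous_finset_sum _ fun i _ => slice_continuous _ σ

lemma slice_integrable_lap (f : SchwartzMap 𝓟 ℂ) (σ : ℝ) :
    Integrable (fun x : 𝓔 => spatialLaplacian (⇑f) (x, σ)) := by
  simp only [spatialLaplacian_eq_schwartz]
  exact integrable_finset_sum _ fun i _ => slice_integrable _ σ

-- pointwise product rule for the time derivative
lemma fderiv_mulS (f g : SchwartzMap 𝓟 ℂ) (p : 𝓟) :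
    fderiv ℝ (⇑(mulS f g)) p ((0:𝓔), (1:ℝ))
      = f p * fderiv ℝ (⇑g) p ((0:𝓔), (1:ℝ)) + fderiv ℝ (⇑f) p ((0:𝓔), (1:ℝ)) * g p := by
  have h : (⇑(mulS f g)) = fun q => f q * g q := rfl
  rw [h, fderiv_fun_mul (f.differentiableAt) (g.differentiableAt)]
  simp [smul_eq_mul]
  ring

lemma schwartz_bound (f : SchwartzMap 𝓟 ℂ) : ∃ C, ∀ p, ‖f p‖ ≤ C := by
  obtain ⟨C, _, h⟩ := f.decay 0 0
  exact ⟨C, fun p => by simpa using h p⟩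

lemma integrable_mul_schwartz_right {f : 𝓔 → ℂ} (hf : Integrable f)
    (χ : SchwartzMap 𝓟 ℂ) (τ : ℝ) :
    Integrable (fun x : 𝓔 => f x * χ (x, τ)) := by
  obtain ⟨C, hC⟩ := schwartz_bound χ
  exact (hf.bdd_mul ((slice_continuous χ τ).aestronglyMeasurable)
    (Filter.Eventually.of_forall fun x => hC _)).congr (Filter.Eventually.of_forall fun x => mul_comm _ _)

lemma slice_continuous_Vψ (V : 𝓟 → ℝ) (hVc : Continuous V) (ψ : SchwartzMap 𝓟 ℂ) (τ : ℝ) :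
    Continuous (fun x : 𝓔 => ((V (x, τ) : ℂ) * ψ (x, τ))) :=
  (Complex.continuous_ofReal.comp
    (hVc.comp (continuous_id.prodMk continuous_const))).mul (slice_continuous ψ τ)

lemma slice_integrable_Vψ (V : 𝓟 → ℝ) (hVc : Continuous V) {M : ℝ} (hVb : ∀ p, |V p| ≤ M)
    (ψ : SchwartzMap 𝓟 ℂ) (τ : ℝ) :
    Integrable (fun x : 𝓔 => ((V (x, τ) : ℂ) * ψ (x, τ))) := by
  refine (slice_integrable ψ τ).bdd_mul
    ((Complex.continuous_ofReal.comp
      (hVc.comp (continuous_id.prodMk continuous_const))).aestronglyMeasurable)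
    (c := M) (Filter.Eventually.of_forall fun x => ?_)
  simpa [Complex.norm_real, Real.norm_eq_abs] using hVb (x, τ)

lemma slice_continuous_s (V : 𝓟 → ℝ) (hVc : Continuous V) (ψ : SchwartzMap 𝓟 ℂ) (τ : ℝ) :
    Continuous (fun x : 𝓔 => -(spatialLaplacian (⇑ψ) (x, τ)) + (V (x, τ) : ℂ) * ψ (x, τ)) :=
  (slice_continuous_lap ψ τ).neg.add (slice_continuous_Vψ V hVc ψ τ)

lemma slice_integrable_s (V : 𝓟 → ℝ) (hVc : Continuous V) {M : ℝ} (hVb : ∀ p, |V p| ≤ M)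
    (ψ : SchwartzMap 𝓟 ℂ) (τ : ℝ) :
    Integrable (fun x : 𝓔 => -(spatialLaplacian (⇑ψ) (x, τ)) + (V (x, τ) : ℂ) * ψ (x, τ)) :=
  (slice_integrable_lap ψ τ).neg.add (slice_integrable_Vψ V hVc hVb ψ τ)

/-- For `V : ℝ³ × ℝ → ℝ` continuous and bounded and `ψ` a Schwartz function
on `ℝ⁴`, the following are equivalent: (i) for every Schwartz test function `χ` and every
`τ`, `d/dτ ∫ ψ(x,τ)χ(x,τ) dx = ∫ ψ(x,τ) ∂χ/∂t(x,τ) dx − i∫ (−Δ_xψ + Vψ)(x,τ) χ(x,τ) dx`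
(the weak form of `dφ_τ/dτ = (−∂/∂t − iĥ)φ_τ` for the path `φ_τ = ψ δ(t−τ)` in `H`);
(ii) `ψ` satisfies the Schrödinger equation `∂ψ/∂t = −i(−Δ_xψ + Vψ)` everywhere. -/
theorem weak_delta_path_equation_iff_schrodinger
    (V : EuclideanSpace ℝ (Fin 3) × ℝ → ℝ) (hVc : Continuous V)
    (hVb : ∃ M : ℝ, ∀ p, |V p| ≤ M)
    (ψ : SchwartzMap (EuclideanSpace ℝ (Fin 3) × ℝ) ℂ) :
    (∀ (χ : SchwartzMap (EuclideanSpace ℝ (Fin 3) × ℝ) ℂ) (τ : ℝ),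
      HasDerivAt (fun σ : ℝ => ∫ x : EuclideanSpace ℝ (Fin 3), ψ (x, σ) * χ (x, σ))
        ((∫ x : EuclideanSpace ℝ (Fin 3),
            ψ (x, τ) * fderiv ℝ (⇑χ) (x, τ) ((0 : EuclideanSpace ℝ (Fin 3)), (1 : ℝ)))
          - Complex.I * ∫ x : EuclideanSpace ℝ (Fin 3),
              (-(spatialLaplacian (⇑ψ) (x, τ)) + (V (x, τ) : ℂ) * ψ (x, τ)) * χ (x, τ)) τ)
    ↔
    (∀ p : EuclideanSpace ℝ (Fin 3) × ℝ,
      fderiv ℝ (⇑ψ) p ((0 : EuclideanSpace ℝ (Fin 3)), (1 : ℝ))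
        = -Complex.I * (-(spatialLaplacian (⇑ψ) p) + (V p : ℂ) * ψ p)) := by
  obtain ⟨M, hVb⟩ := hVb
  have I1 : ∀ (χ : SchwartzMap 𝓟 ℂ) (τ : ℝ), Integrable (fun x : 𝓔 =>
      ψ (x, τ) * fderiv ℝ (⇑χ) (x, τ) ((0 : 𝓔), (1 : ℝ))) := fun χ τ =>
    slice_integrable (mulS ψ (LineDeriv.lineDerivOpCLM ℝ (SchwartzMap 𝓟 ℂ) ((0 : 𝓔), (1 : ℝ)) χ)) τ
  have I2 : ∀ (χ : SchwartzMap 𝓟 ℂ) (τ : ℝ), Integrable (fun x : 𝓔 =>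
      fderiv ℝ (⇑ψ) (x, τ) ((0 : 𝓔), (1 : ℝ)) * χ (x, τ)) := fun χ τ =>
    slice_integrable (mulS (LineDeriv.lineDerivOpCLM ℝ (SchwartzMap 𝓟 ℂ) ((0 : 𝓔), (1 : ℝ)) ψ) χ) τ
  have I3 : ∀ (χ : SchwartzMap 𝓟 ℂ) (τ : ℝ), Integrable (fun x : 𝓔 =>
      (-(spatialLaplacian (⇑ψ) (x, τ)) + (V (x, τ) : ℂ) * ψ (x, τ)) * χ (x, τ)) := fun χ τ =>
    integrable_mul_schwartz_right (slice_integrable_s V hVc hVb ψ τ) χ τ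
  have hexp : ∀ (χ : SchwartzMap 𝓟 ℂ) (τ : ℝ),
      (∫ x : 𝓔, fderiv ℝ (⇑(mulS ψ χ)) (x, τ) ((0 : 𝓔), (1 : ℝ)))
        = (∫ x : 𝓔, ψ (x, τ) * fderiv ℝ (⇑χ) (x, τ) ((0 : 𝓔), (1 : ℝ)))
          + ∫ x : 𝓔, fderiv ℝ (⇑ψ) (x, τ) ((0 : 𝓔), (1 : ℝ)) * χ (x, τ) := by
    intro χ τ
    rw [← integral_add (I1 χ τ) (I2 χ τ)]
    exact integral_congr_ae (Filter.Eventually.of_forall fun x => fderiv_mulS ψ χ (x, τ))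
  constructor
  · -- weak ⇒ strong
    intro h p
    obtain ⟨x₀, t₀⟩ := p
    set u : 𝓔 → ℂ := fun x => fderiv ℝ (⇑ψ) (x, t₀) ((0 : 𝓔), (1 : ℝ))
      + Complex.I * (-(spatialLaplacian (⇑ψ) (x, t₀)) + (V (x, t₀) : ℂ) * ψ (x, t₀)) with hu
    have key : ∀ χ : SchwartzMap 𝓟 ℂ, (∫ x : 𝓔, u x * χ (x, t₀)) = 0 := by
      intro χ
      have huniq := (h χ t₀).unique (hasDerivAt_slice_integral (mulS ψ χ) t₀)
      have hd : (∫ x : 𝓔, fderiv ℝ (⇑ψ) (x, t₀) ((0 : 𝓔), (1 : ℝ)) * χ (x, t₀))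
          = -Complex.I * ∫ x : 𝓔,
            (-(spatialLaplacian (⇑ψ) (x, t₀)) + (V (x, t₀) : ℂ) * ψ (x, t₀)) * χ (x, t₀) := by
        have h2 := hexp χ t₀
        rw [← huniq] at h2
        linear_combination -h2
      have hsplit : (∫ x : 𝓔, u x * χ (x, t₀))
          = (∫ x : 𝓔, fderiv ℝ (⇑ψ) (x, t₀) ((0 : 𝓔), (1 : ℝ)) * χ (x, t₀))
            + ∫ x : 𝓔, Complex.I * ((-(spatialLaplacian (⇑ψ) (x, t₀))
                + (V (x, t₀) : ℂ) * ψ (x, t₀)) * χ (x, t₀)) := by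
        rw [← integral_add (I2 χ t₀) ((I3 χ t₀).const_mul Complex.I)]
        refine integral_congr_ae (Filter.Eventually.of_forall fun x => ?_)
        simp only [hu]
        ring
      rw [hsplit, hd, integral_const_mul]
      ring
    have hu_cont : Continuous u :=
      (slice_continuous (LineDeriv.lineDerivOpCLM ℝ (SchwartzMap 𝓟 ℂ) ((0 : 𝓔), (1 : ℝ)) ψ) t₀).add
        (continuous_const.mul (slice_continuous_s V hVc ψ t₀))
    have hu_int : Integrable u :=
      (slice_integrable (LineDeriv.lineDerivOpCLM ℝ (SchwartzMap 𝓟 ℂ) ((0 : 𝓔), (1 : ℝ)) ψ) t₀).add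
        ((slice_integrable_s V hVc hVb ψ t₀).const_mul Complex.I)
    have h0 : ∀ g : 𝓔 → ℝ, ContDiff ℝ ∞ g → HasCompactSupport g →
        (∫ x : 𝓔, g x • u x) = 0 := by
      intro g hg hgs
      obtain ⟨χ, hχ⟩ := exists_schwartz_slice t₀ g hg hgs
      have heq : (fun x : 𝓔 => g x • u x) = fun x : 𝓔 => u x * χ (x, t₀) := by
        funext x
        rw [hχ x, Complex.real_smul, mul_comm]
      rw [heq]
      exact key χ
    have hae : ∀ᵐ x : 𝓔, u x = 0 :=
      ae_eq_zero_of_integral_contDiff_smul_eq_zero (hu_int.locallyIntegrable) h0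
    have hzero : u = fun _ => 0 := by
      rw [← hu_cont.ae_eq_iff_eq volume continuous_const]
      exact hae
    have hx₀ := congrFun hzero x₀
    simp only [hu] at hx₀
    linear_combination hx₀
  · -- strong ⇒ weak
    intro h χ τ
    have h2 : HasDerivAt (fun σ : ℝ => ∫ x : 𝓔, ψ (x, σ) * χ (x, σ))
        (∫ x : 𝓔, fderiv ℝ (⇑(mulS ψ χ)) (x, τ) ((0 : 𝓔), (1 : ℝ))) τ :=
      hasDerivAt_slice_integral (mulS ψ χ) τ
    convert h2 using 1
    rw [hexp χ τ]
    have hd : (∫ x : 𝓔, fderiv ℝ (⇑ψ) (x, τ) ((0 : 𝓔), (1 : ℝ)) * χ (x, τ))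
        = -Complex.I * ∫ x : 𝓔,
          (-(spatialLaplacian (⇑ψ) (x, τ)) + (V (x, τ) : ℂ) * ψ (x, τ)) * χ (x, τ) := by
      rw [← integral_const_mul]
      refine integral_congr_ae (Filter.Eventually.of_forall fun x => ?_)
      simp only
      rw [h (x, τ)]
      ring
    rw [hd]
    ring
end

section
/- Let p = k + l with k, l ≥ 0, and let η be the symmetric bilinear form on ℝ^p with η(u, v) = Σ_{r=1}^{k} u_r v_r − Σ_{r=k+1}^{p} u_r v_r. Let U ⊆ ℝⁿ be open and X : U → ℝ^p be twice continuously differentiable, and define K : U × U → ℝ by K(u, v) = exp(−(1/2) η(X(u) − X(v), X(u) − X(v))). Then for every u ∈ U and all indices μ, ν ∈ {1, …, n}, the mixed partial derivative satisfies ∂²K/∂u^μ ∂v^ν evaluated at v = u equals η(∂X/∂u^μ (u), ∂X/∂u^ν (u)) = Σ_{r=1}^{k} ∂X^r/∂u^μ ∂X^r/∂u^ν − Σ_{r=k+1}^{p} ∂X^r/∂u^μ ∂X^r/∂u^ν, i.e., it equals the pullback metric g_{μν}(u) = η_{rs} ∂X^r/∂u^μ ∂X^s/∂u^ν. -/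
open MeasureTheory Real

/-- The flat symmetric bilinear form of signature `(k, l)` on `ℝ^p` (`p = k + l`):
`η(u, v) = Σ_{r<k} u_r v_r − Σ_{r≥k} u_r v_r`. -/
def etaForm (k : ℕ) {p : ℕ} (u v : EuclideanSpace ℝ (Fin p)) : ℝ :=
  ∑ r : Fin p, (if (r : ℕ) < k then (1 : ℝ) else -1) * u r * v r

/-- The Gaussian-type kernel `K(u, v) = exp(−(1/2) η(X(u) − X(v), X(u) − X(v)))` built from
a map `X : U → ℝ^p` into flat pseudo-Euclidean space of signature `(k, l)`. -/
noncomputable def kernelK (k : ℕ) {n p : ℕ}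
    (X : EuclideanSpace ℝ (Fin n) → EuclideanSpace ℝ (Fin p))
    (u v : EuclideanSpace ℝ (Fin n)) : ℝ :=
  Real.exp (-(1 / 2) * etaForm k (X u - X v) (X u - X v))

section Aux

variable {n p : ℕ} (k : ℕ) (X : EuclideanSpace ℝ (Fin n) → EuclideanSpace ℝ (Fin p))
  (u : EuclideanSpace ℝ (Fin n))

lemma aux_inner (hXd : HasFDerivAt X (fderiv ℝ X u) u)
    (w e : EuclideanSpace ℝ (Fin n)) :
    fderiv ℝ (fun z => kernelK k X w z) u e
      = Real.exp (-(1/2) * etaForm k (X w - X u) (X w - X u)) *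
        etaForm k (X w - X u) (fderiv ℝ X u e) := by
  set d := fderiv ℝ X u with hd
  set c : Fin p → ℝ := fun r => if (r : ℕ) < k then (1 : ℝ) else -1 with hc
  have hpr : ∀ r : Fin p, HasFDerivAt (fun z => X z r)
      ((EuclideanSpace.proj r : EuclideanSpace ℝ (Fin p) →L[ℝ] ℝ).comp d) u :=
    fun r => ((EuclideanSpace.proj r : EuclideanSpace ℝ (Fin p) →L[ℝ] ℝ).hasFDerivAt).comp u hXd
  have hg : ∀ r : Fin p, HasFDerivAt (fun z => (X w) r - X z r)
      (-((EuclideanSpace.proj r : EuclideanSpace ℝ (Fin p) →L[ℝ] ℝ).comp d)) u := fun r => by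
    simpa using (hasFDerivAt_const ((X w) r) u).fun_sub (hpr r)
  have hQ := (HasFDerivAt.fun_sum (fun r (_ : r ∈ Finset.univ) =>
      (((hg r).const_mul (c r)).fun_mul (hg r)))).const_mul (-(1/2 : ℝ))
  have hfun : (fun z => kernelK k X w z)
      = (fun z => Real.exp (-(1/2:ℝ) * ∑ r : Fin p, c r * ((X w) r - X z r) * ((X w) r - X z r))) := by
    funext z
    simp [kernelK, etaForm, hc]
  rw [hfun, hQ.exp.fderiv]
  simp only [ContinuousLinearMap.smul_apply, ContinuousLinearMap.sum_apply,
    ContinuousLinearMap.add_apply, ContinuousLinearMap.neg_apply,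
    ContinuousLinearMap.comp_apply, smul_eq_mul]
  have hproj : ∀ (r : Fin p) (y : EuclideanSpace ℝ (Fin p)), (EuclideanSpace.proj r : EuclideanSpace ℝ (Fin p) →L[ℝ] ℝ) y = y r := fun _ _ => rfl
  simp only [hproj, etaForm, PiLp.sub_apply]
  rw [Finset.mul_sum, Finset.mul_sum]
  congr 1
  refine Finset.sum_congr rfl fun r _ => ?_
  ring

end Aux

example : True := trivial

section Aux2

variable {n p : ℕ} (k : ℕ) (X : EuclideanSpace ℝ (Fin n) → EuclideanSpace ℝ (Fin p))
  (u : EuclideanSpace ℝ (Fin n))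

lemma aux_outer (hXd : HasFDerivAt X (fderiv ℝ X u) u)
    (a : EuclideanSpace ℝ (Fin p)) (e : EuclideanSpace ℝ (Fin n)) :
    fderiv ℝ (fun w => Real.exp (-(1/2) * etaForm k (X w - X u) (X w - X u)) *
        etaForm k (X w - X u) a) u e
      = etaForm k (fderiv ℝ X u e) a := by
  set d := fderiv ℝ X u with hd
  set c : Fin p → ℝ := fun r => if (r : ℕ) < k then (1 : ℝ) else -1 with hc
  have hproj : ∀ (r : Fin p) (y : EuclideanSpace ℝ (Fin p)),
      (EuclideanSpace.proj r : EuclideanSpace ℝ (Fin p) →L[ℝ] ℝ) y = y r := fun _ _ => rfl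
  have hh : ∀ r : Fin p, HasFDerivAt (fun w => X w r - (X u) r)
      ((EuclideanSpace.proj r : EuclideanSpace ℝ (Fin p) →L[ℝ] ℝ).comp d) u := fun r => by
    simpa using (((EuclideanSpace.proj r : EuclideanSpace ℝ (Fin p) →L[ℝ] ℝ).hasFDerivAt).comp
      u hXd).fun_sub (hasFDerivAt_const ((X u) r) u)
  have hQ := (HasFDerivAt.fun_sum (fun r (_ : r ∈ Finset.univ) =>
      (((hh r).const_mul (c r)).fun_mul (hh r)))).const_mul (-(1/2 : ℝ))
  have hB := HasFDerivAt.fun_sum (fun r (_ : r ∈ (Finset.univ : Finset (Fin p))) =>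
      (((hh r).const_mul (c r)).mul_const (a r)))
  have hF := hQ.exp.fun_mul hB
  have hfun : (fun w => Real.exp (-(1/2) * etaForm k (X w - X u) (X w - X u)) *
        etaForm k (X w - X u) a)
      = (fun w => Real.exp (-(1/2:ℝ) * ∑ r : Fin p, c r * (X w r - (X u) r) * (X w r - (X u) r)) *
          ∑ r : Fin p, c r * (X w r - (X u) r) * a r) := by
    funext w
    simp [etaForm, hc]
  rw [hfun, hF.fderiv]
  simp only [ContinuousLinearMap.smul_apply, ContinuousLinearMap.sum_apply,
    ContinuousLinearMap.add_apply, ContinuousLinearMap.comp_apply, smul_eq_mul, hproj,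
    sub_self, mul_zero, zero_mul, Finset.sum_const_zero, neg_zero, Real.exp_zero, add_zero,
    zero_add, one_mul, zero_smul, smul_zero]
  simp only [etaForm, hc]
  exact Finset.sum_congr rfl fun r _ => by ring

end Aux2

/-- Let `p = k + l`, `U ⊆ ℝⁿ` open, and `X : U → ℝ^p` twice continuously
differentiable. Then for every `u ∈ U` and all `μ, ν`, the mixed partial derivative
`∂²K/∂u^μ∂v^ν` of `K(u,v) = exp(−½ η(X(u)−X(v), X(u)−X(v)))`, evaluated at `v = u`, equals
the pullback metric `g_{μν}(u) = η(∂X/∂u^μ, ∂X/∂u^ν) = Σ_{r<k} ∂_μX^r ∂_νX^r − Σ_{r≥k} ∂_μX^r ∂_νX^r`. -/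
theorem mixed_partial_of_kernel_is_pullback_metric
    (n k l p : ℕ) (hp : p = k + l)
    (U : Set (EuclideanSpace ℝ (Fin n))) (hU : IsOpen U)
    (X : EuclideanSpace ℝ (Fin n) → EuclideanSpace ℝ (Fin p))
    (hX : ContDiffOn ℝ 2 X U) :
    ∀ u ∈ U, ∀ μ ν : Fin n,
      fderiv ℝ (fun w => fderiv ℝ (fun z => kernelK k X w z) u (EuclideanSpace.single ν 1)) u
          (EuclideanSpace.single μ 1)
        = etaForm k (fderiv ℝ X u (EuclideanSpace.single μ 1))
            (fderiv ℝ X u (EuclideanSpace.single ν 1)) ∧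
      etaForm k (fderiv ℝ X u (EuclideanSpace.single μ 1))
          (fderiv ℝ X u (EuclideanSpace.single ν 1))
        = (∑ r : Fin p, (if (r : ℕ) < k then (1 : ℝ) else -1) *
            fderiv ℝ X u (EuclideanSpace.single μ 1) r *
            fderiv ℝ X u (EuclideanSpace.single ν 1) r) := by
  intro u hu μ ν
  refine ⟨?_, rfl⟩
  have hXd : HasFDerivAt X (fderiv ℝ X u) u :=
    (((hX.contDiffAt (hU.mem_nhds hu)).differentiableAt (by norm_num)).hasFDerivAt)
  have hfun : (fun w => fderiv ℝ (fun z => kernelK k X w z) u (EuclideanSpace.single ν 1))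
      = (fun w => Real.exp (-(1/2) * etaForm k (X w - X u) (X w - X u)) *
          etaForm k (X w - X u) (fderiv ℝ X u (EuclideanSpace.single ν 1))) := by
    funext w
    exact aux_inner k X u hXd w (EuclideanSpace.single ν 1)
  rw [hfun]
  exact aux_outer k X u hXd _ _
end
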